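/- arXiv:2305.19557 — 4 statements merged into one kernel-verified Lean document; each statement's English description precedes it below -/
import Mathlib

section
/- Every positive semidefinite Hermitian Toeplitz matrix X admits a Vandermonde decomposition X = V D V*, where V has columns of the form (1, e^{iθ}, e^{2iθ}, …, e^{(n-1)iθ})ᵀ for real angles θ, and D is diagonal with nonnegative entries. -/
open Matrix Complex
open scoped ComplexOrder


open Module LinearMap
open scoped InnerProductSpace ComplexConjugate

universe u

theorem unitary_eigenbasis (m : ℕ) :
    ∀ {E : Type u} [NormedAddCommGroup E] [InnerProductSpace ℂ E] [FiniteDimensional ℂ E],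
      Module.finrank ℂ E = m → ∀ U : E →ₗᵢ[ℂ] E,
      ∃ (w : OrthonormalBasis (Fin m) ℂ E) (lam : Fin m → ℂ),
        ∀ k, U (w k) = lam k • w k := by
  induction m with
  | zero =>
    intro E _ _ _ hn U
    haveI : Subsingleton E := Module.finrank_zero_iff.mp hn
    have hon : Orthonormal ℂ (Fin.elim0 : Fin 0 → E) := ⟨fun i => i.elim0, fun i => i.elim0⟩
    have hsp : ⊤ ≤ Submodule.span ℂ (Set.range (Fin.elim0 : Fin 0 → E)) := by
      intro x _
      have : x = 0 := Subsingleton.elim x 0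
      simp [this]
    exact ⟨OrthonormalBasis.mk hon hsp, Fin.elim0, fun k => k.elim0⟩
  | succ m ih =>
    intro E _ _ _ hn U
    haveI : Nontrivial E := Module.finrank_pos_iff (R := ℂ) |>.mp (by omega)
    set T := U.toLinearMap with hT
    have hTin : ∀ x y, ⟪T x, T y⟫_ℂ = ⟪x, y⟫_ℂ := fun x y => U.inner_map_map x y
    have hTn : ∀ x, ‖T x‖ = ‖x‖ := fun x => U.norm_map x
    obtain ⟨μ, hμ⟩ := Module.End.exists_eigenvalue T
    obtain ⟨v, hv⟩ := hμ.exists_hasEigenvector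
    have hv0 : v ≠ 0 := hv.2
    set v₀ : E := ((‖v‖⁻¹ : ℝ) : ℂ) • v with hv₀def
    have hv₀ne : v₀ ≠ 0 := by
      simp [hv₀def, smul_eq_zero, hv0, norm_eq_zero, inv_eq_zero, Complex.ofReal_eq_zero]
    have hnorm : ‖v₀‖ = 1 := by
      rw [hv₀def, norm_smul]
      simp [inv_mul_cancel₀ (norm_ne_zero_iff.mpr hv0)]
    have heig : T v₀ = μ • v₀ := by
      rw [hv₀def, _root_.map_smul, hv.apply_eq_smul, smul_comm]
    have hμne : μ ≠ 0 := by
      intro h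
      have h1 : ‖T v₀‖ = ‖v₀‖ := hTn v₀
      rw [heig, h, zero_smul, norm_zero] at h1
      rw [← h1] at hnorm; norm_num at hnorm
    set S : Submodule ℂ E := ℂ ∙ v₀ with hS
    have hinv : ∀ x ∈ Sᗮ, T x ∈ Sᗮ := by
      intro x hx
      rw [Submodule.mem_orthogonal_singleton_iff_inner_right] at hx ⊢
      have h1 : conj μ * ⟪v₀, T x⟫_ℂ = 0 := by
        rw [← inner_smul_left, ← heig, hTin, hx]
      have h2 : conj μ ≠ 0 := by simpa using hμne
      exact (mul_eq_zero.mp h1).resolve_left h2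
    set U' : Sᗮ →ₗᵢ[ℂ] Sᗮ :=
      { toLinearMap := T.restrict hinv
        norm_map' := fun x => by
          have : ((T.restrict hinv x : Sᗮ) : E) = T (x : E) := rfl
          rw [← Submodule.norm_coe, this, hTn, Submodule.norm_coe] } with hU'
    have hrankS : finrank ℂ S = 1 := finrank_span_singleton hv₀ne
    have hrank : finrank ℂ Sᗮ = m := by
      have := S.finrank_add_finrank_orthogonal
      rw [hrankS, hn] at this
      omega
    obtain ⟨b, lam', hb⟩ := ih hrank U'
    set g : Fin (m + 1) → E := Fin.cons v₀ (fun k => (b k : E)) with hg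
    have hon : Orthonormal ℂ g := by
      rw [orthonormal_iff_ite]
      intro i j
      refine Fin.cases ?_ ?_ i <;> [skip; intro i'] <;> refine Fin.cases ?_ ?_ j
      · simp only [hg, Fin.cons_zero, if_pos rfl]
        rw [@inner_self_eq_norm_sq_to_K ℂ]
        rw [hnorm]; norm_num
      · intro j'
        simp only [hg, Fin.cons_zero, Fin.cons_succ]
        rw [if_neg (by simp [Fin.ext_iff])]
        exact Submodule.inner_right_of_mem_orthogonal (Submodule.mem_span_singleton_self v₀) (b j').2
      · simp only [hg, Fin.cons_zero, Fin.cons_succ]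
        rw [if_neg (by simp [Fin.ext_iff])]
        exact Submodule.inner_left_of_mem_orthogonal (Submodule.mem_span_singleton_self v₀) (b i').2
      · intro j'
        simp only [hg, Fin.cons_succ]
        rw [← Submodule.coe_inner]
        rw [orthonormal_iff_ite.mp b.orthonormal i' j']
        simp [Fin.succ_inj]
    have hsp : ⊤ ≤ Submodule.span ℂ (Set.range g) := by
      rw [← Submodule.sup_orthogonal_of_hasOrthogonalProjection (K := S)]
      apply sup_le
      · rw [hS, Submodule.span_singleton_le_iff_mem]
        exact Submodule.subset_span ⟨0, by simp [hg]⟩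
      · intro x hx
        have : Sᗮ = Submodule.map Sᗮ.subtype ⊤ := (Submodule.map_subtype_top _).symm
        rw [this, ← b.toBasis.span_eq, Submodule.map_span] at hx
        refine Submodule.span_mono ?_ hx
        rintro y ⟨z, ⟨k, rfl⟩, rfl⟩
        exact ⟨k.succ, by simp [hg]⟩
    refine ⟨OrthonormalBasis.mk hon hsp, Fin.cons μ lam', fun k => ?_⟩
    rw [OrthonormalBasis.coe_mk]
    refine Fin.cases ?_ ?_ k
    · simpa [hg, hT] using heig
    · intro k'
      simp only [hg, Fin.cons_succ]
      have : U ((b k' : Sᗮ) : E) = ((U' (b k') : Sᗮ) : E) := rfl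
      rw [this, hb k']
      simp

/-- Every PSD Hermitian Toeplitz matrix `X` admits a Vandermonde decomposition
`X = V D Vᴴ` where the columns of `V` are of the form `(1, e^{iθ}, …, e^{(n-1)iθ})ᵀ`
and `D` is diagonal with nonnegative entries. -/
theorem stmt1 {n : ℕ} (X : Matrix (Fin n) (Fin n) ℂ)
    (hToep : ∀ i j i' j' : Fin n, (i : ℤ) - (j : ℤ) = (i' : ℤ) - (j' : ℤ) → X i j = X i' j')
    (hPSD : X.PosSemidef) :
    ∃ (θ : Fin n → ℝ) (d : Fin n → ℝ), (∀ k, 0 ≤ d k) ∧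
      X = (Matrix.of fun (i k : Fin n) => Complex.exp (Complex.I * ((i : ℕ) : ℂ) * ((θ k : ℝ) : ℂ)))
            * Matrix.diagonal (fun k => ((d k : ℝ) : ℂ))
            * (Matrix.of fun (i k : Fin n) => Complex.exp (Complex.I * ((i : ℕ) : ℂ) * ((θ k : ℝ) : ℂ)))ᴴ := by
  classical
  rcases Nat.eq_zero_or_pos n with hn0 | hn0
  · subst hn0
    exact ⟨0, 0, fun k => le_rfl, by ext i j; exact i.elim0⟩
  obtain ⟨B, hBX⟩ : ∃ B : Matrix (Fin n) (Fin n) ℂ, X = Bᴴ * B := by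
    open scoped MatrixOrder in
    obtain ⟨B, hB⟩ := CStarAlgebra.nonneg_iff_eq_star_mul_self.mp hPSD.nonneg
    exact ⟨B, hB⟩
  set E := EuclideanSpace ℂ (Fin n) with hE
  set f : Fin n → E := fun j => (WithLp.toLp 2 fun i => B i j) with hf
  have hX : ∀ j l, X j l = ⟪f j, f l⟫_ℂ := by
    intro j l
    rw [hBX]
    rw [show (⟪f j, f l⟫_ℂ) = ∑ i, (starRingEnd ℂ) (f j i) * (f l i) by rw [PiLp.inner_apply]; simp [mul_comm]]
    simp [Matrix.mul_apply, hf, Matrix.conjTranspose_apply]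
  set emb₀ : Fin (n-1) → Fin n := fun a => ⟨a, by omega⟩ with hemb₀
  set emb₁ : Fin (n-1) → Fin n := fun a => ⟨a+1, by omega⟩ with hemb₁
  have hshift : ∀ (a b : Fin (n-1)), ⟪f (emb₁ a), f (emb₁ b)⟫_ℂ = ⟪f (emb₀ a), f (emb₀ b)⟫_ℂ := by
    intro a b
    rw [← hX, ← hX]
    apply hToep
    simp [hemb₀, hemb₁]
  set φ : (Fin (n-1) → ℂ) →ₗ[ℂ] E :=
    { toFun := fun x => ∑ j, x j • f (emb₀ j)
      map_add' := fun x y => by simp [add_smul, Finset.sum_add_distrib]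
      map_smul' := fun c x => by simp [smul_smul, Finset.smul_sum] } with hφ
  set ψ : (Fin (n-1) → ℂ) →ₗ[ℂ] E :=
    { toFun := fun x => ∑ j, x j • f (emb₁ j)
      map_add' := fun x y => by simp [add_smul, Finset.sum_add_distrib]
      map_smul' := fun c x => by simp [smul_smul, Finset.smul_sum] } with hψ
  have hφψ : ∀ x y, ⟪φ x, φ y⟫_ℂ = ⟪ψ x, ψ y⟫_ℂ := by
    intro x y
    simp only [hφ, hψ, LinearMap.coe_mk, AddHom.coe_mk]
    rw [sum_inner, sum_inner]
    refine Finset.sum_congr rfl fun a _ => ?_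
    rw [inner_sum, inner_sum]
    refine Finset.sum_congr rfl fun b _ => ?_
    rw [inner_smul_left, inner_smul_left, inner_smul_right, inner_smul_right, hshift]
  have hker : LinearMap.ker φ ≤ LinearMap.ker ψ := by
    intro x hx
    rw [LinearMap.mem_ker] at hx ⊢
    have : ⟪ψ x, ψ x⟫_ℂ = 0 := by rw [← hφψ, hx, inner_zero_right]
    exact inner_self_eq_zero.mp this
  set l : (LinearMap.range φ) →ₗ[ℂ] E :=
    ((LinearMap.ker φ).liftQ ψ hker) ∘ₗ (φ.quotKerEquivRange.symm : LinearMap.range φ →ₗ[ℂ] _) with hl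
  have hlap : ∀ (x : Fin (n-1) → ℂ) (hm : φ x ∈ LinearMap.range φ), l ⟨φ x, hm⟩ = ψ x := by
    intro x hm
    have h1 : (φ.quotKerEquivRange.symm ⟨φ x, hm⟩) = Submodule.Quotient.mk x := by
      rw [LinearEquiv.symm_apply_eq]
      exact Subtype.ext (φ.quotKerEquivRange_apply_mk x)
    simp only [hl, LinearMap.coe_comp, Function.comp_apply, LinearEquiv.coe_coe, h1]
    exact Submodule.liftQ_apply _ _ _
  have hnorml : ∀ s : LinearMap.range φ, ‖l s‖ = ‖s‖ := by
    rintro ⟨s, hs⟩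
    obtain ⟨x, rfl⟩ := hs
    rw [hlap x (LinearMap.mem_range_self φ x)]
    have hsn : ‖(⟨φ x, LinearMap.mem_range_self φ x⟩ : LinearMap.range φ)‖ = ‖φ x‖ := rfl
    rw [hsn, ← sq_eq_sq₀ (norm_nonneg _) (norm_nonneg _)]
    have := hφψ x x
    rw [@inner_self_eq_norm_sq_to_K ℂ, @inner_self_eq_norm_sq_to_K ℂ] at this
    exact_mod_cast this.symm
  set Lisom : (LinearMap.range φ) →ₗᵢ[ℂ] E := ⟨l, hnorml⟩ with hLisom
  set U : E →ₗᵢ[ℂ] E := Lisom.extend with hUdef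
  set T := U.toLinearMap with hTdef
  have hTin : ∀ x y, ⟪T x, T y⟫_ℂ = ⟪x, y⟫_ℂ := fun x y => U.inner_map_map x y
  have hφsingle : ∀ a : Fin (n-1), φ (Pi.single a 1) = f (emb₀ a) := by
    intro a
    simp [hφ, Pi.single_apply, ite_smul]
  have hψsingle : ∀ a : Fin (n-1), ψ (Pi.single a 1) = f (emb₁ a) := by
    intro a
    simp [hψ, Pi.single_apply, ite_smul]
  have hU : ∀ a : Fin (n-1), T (f (emb₀ a)) = f (emb₁ a) := by
    intro a
    have h1 := Lisom.extend_apply ⟨φ (Pi.single a 1), LinearMap.mem_range_self φ _⟩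
    have h2 : Lisom ⟨φ (Pi.single a 1), LinearMap.mem_range_self φ _⟩ = ψ (Pi.single a 1) :=
      hlap _ _
    rw [h2, hψsingle] at h1
    rw [← hφsingle a]
    exact h1
  set h : E := f ⟨0, hn0⟩ with hh
  have key : ∀ (m : ℕ) (hm : m < n), f ⟨m, hm⟩ = (T ^ m) h := by
    intro m
    induction m with
    | zero => intro hm; simp [hh]
    | succ m ihm =>
      intro hm
      have hm1 : m < n := by omega
      have hm' : m < n - 1 := by omega
      have e0 : emb₀ ⟨m, hm'⟩ = ⟨m, hm1⟩ := rfl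
      have e1 : emb₁ ⟨m, hm'⟩ = ⟨m+1, hm⟩ := rfl
      rw [← e1, ← hU ⟨m, hm'⟩, e0, ihm hm1, pow_succ']
      rfl
  obtain ⟨w, lam, hwl⟩ := unitary_eigenbasis n (finrank_euclideanSpace_fin) U
  have habs : ∀ k, ‖lam k‖ = 1 := by
    intro k
    have h1 : ‖U (w k)‖ = ‖w k‖ := U.norm_map _
    have h2 : ‖w k‖ = 1 := w.orthonormal.1 k
    rw [hwl k, norm_smul, h2, mul_one] at h1
    simpa using h1
  have hlamne : ∀ k, lam k ≠ 0 := by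
    intro k hk
    have := habs k
    rw [hk] at this
    simp at this
  have hconj : ∀ k, (starRingEnd ℂ) (lam k) = (lam k)⁻¹ := by
    intro k
    have h1 : lam k * (starRingEnd ℂ) (lam k) = 1 := by
      rw [Complex.mul_conj, Complex.normSq_eq_norm_sq, habs k]
      norm_num
    field_simp [hlamne k] at h1 ⊢
    rw [mul_comm] at h1
    exact (mul_comm _ _).trans h1
  have hinner : ∀ (m : ℕ) (k : Fin n), ⟪(T ^ m) h, w k⟫_ℂ = ((lam k)⁻¹)^m * ⟪h, w k⟫_ℂ := by
    intro m k
    induction m with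
    | zero => simp
    | succ m ihm =>
      have hwk : T (w k) = lam k • w k := hwl k
      have hTw : T ((lam k)⁻¹ • w k) = w k := by
        rw [_root_.map_smul, hwk, smul_smul, inv_mul_cancel₀ (hlamne k), one_smul]
      calc ⟪(T ^ (m+1)) h, w k⟫_ℂ = ⟪T ((T ^ m) h), T ((lam k)⁻¹ • w k)⟫_ℂ := by
            rw [hTw, pow_succ']; rfl
        _ = ⟪(T ^ m) h, (lam k)⁻¹ • w k⟫_ℂ := hTin _ _
        _ = (lam k)⁻¹ * ⟪(T ^ m) h, w k⟫_ℂ := inner_smul_right _ _ _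
        _ = ((lam k)⁻¹)^(m+1) * ⟪h, w k⟫_ℂ := by rw [ihm]; ring
  refine ⟨fun k => ((lam k)⁻¹).arg, fun k => Complex.normSq (⟪h, w k⟫_ℂ),
    fun k => Complex.normSq_nonneg _, ?_⟩
  have hexp : ∀ k, Complex.exp (Complex.I * (((lam k)⁻¹).arg : ℂ)) = (lam k)⁻¹ := by
    intro k
    have h1 := Complex.norm_mul_exp_arg_mul_I ((lam k)⁻¹)
    rw [norm_inv, habs k] at h1
    simpa [mul_comm] using h1
  ext j jl
  rw [hX, key j.1 j.2, key jl.1 jl.2, ← w.sum_inner_mul_inner ((T ^ (j:ℕ)) h) ((T ^ (jl:ℕ)) h)]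
  rw [Matrix.mul_apply]
  refine Finset.sum_congr rfl fun k _ => ?_
  rw [Matrix.mul_diagonal, Matrix.conjTranspose_apply, Matrix.of_apply, Matrix.of_apply]
  have hVjk : Complex.exp (Complex.I * ((j:ℕ):ℂ) * ((((lam k)⁻¹).arg : ℝ) : ℂ)) = ((lam k)⁻¹)^(j:ℕ) := by
    rw [show Complex.I * ((j:ℕ):ℂ) * ((((lam k)⁻¹).arg : ℝ) : ℂ)
        = ((j:ℕ):ℂ) * (Complex.I * ((((lam k)⁻¹).arg : ℝ) : ℂ)) by ring]
    rw [Complex.exp_nat_mul, hexp]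
  have hVlk : Complex.exp (Complex.I * ((jl:ℕ):ℂ) * ((((lam k)⁻¹).arg : ℝ) : ℂ)) = ((lam k)⁻¹)^(jl:ℕ) := by
    rw [show Complex.I * ((jl:ℕ):ℂ) * ((((lam k)⁻¹).arg : ℝ) : ℂ)
        = ((jl:ℕ):ℂ) * (Complex.I * ((((lam k)⁻¹).arg : ℝ) : ℂ)) by ring]
    rw [Complex.exp_nat_mul, hexp]
  rw [hVjk, hVlk, hinner]
  have hwinner : ⟪w k, (T ^ (jl:ℕ)) h⟫_ℂ = (starRingEnd ℂ) (((lam k)⁻¹)^(jl:ℕ) * ⟪h, w k⟫_ℂ) := by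
    rw [← inner_conj_symm, hinner]
  rw [hwinner]
  have hstar : star ((lam k)⁻¹ ^ (jl:ℕ)) = (lam k)^(jl:ℕ) := by
    rw [show star ((lam k)⁻¹ ^ (jl:ℕ)) = (starRingEnd ℂ) ((lam k)⁻¹ ^ (jl:ℕ)) from rfl,
      map_pow, map_inv₀, hconj k, inv_inv]
  have hns : ((Complex.normSq (⟪h, w k⟫_ℂ) : ℝ) : ℂ) = ⟪h, w k⟫_ℂ * (starRingEnd ℂ) (⟪h, w k⟫_ℂ) :=
    (Complex.mul_conj _).symm
  rw [_root_.map_mul, map_pow, map_inv₀, hconj k, inv_inv]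
  simp only [hstar, hns]
  ring
end

section
/- Every pure tensor product of moment vectors v^{(j₁)}(θ₁) ⊗ ⋯ ⊗ v^{(j_r)}(θ_r) lies in the set C_BlockToep of tensors z such that z = Z_{*,…,*,0,…,0} for some positive semidefinite Hermitian block Toeplitz tensor Z with all 'diagonal' entries Z_{x₁,…,x_r,x₁,…,x_r} equal to 1; consequently the convex hull of all such pure tensors is contained in C_BlockToep. -/
open Matrix Complex
open scoped ComplexOrder BigOperators

noncomputable section

/-- A tensor of size `n₁×⋯×n_r × n₁×⋯×n_r` (viewed as a matrix indexed by multi-indices)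
is (Hermitian) block Toeplitz: its entries depend only on the coordinatewise differences of
the multi-indices. -/
def IsBlockToeplitz {r : ℕ} {j : Fin r → ℕ}
    (Z : Matrix (∀ k, Fin (j k + 1)) (∀ k, Fin (j k + 1)) ℂ) : Prop :=
  ∀ x y x' y' : ∀ k, Fin (j k + 1),
    (∀ k, ((x k : ℤ) - (y k : ℤ)) = ((x' k : ℤ) - (y' k : ℤ))) → Z x y = Z x' y'

/-- The block-Toeplitz relaxation `C_BlockToep` of the multivariate Carathéodory orbitope:
tensors arising as the slice `Z_{*,…,*,0,…,0}` of a PSD Hermitian block Toeplitz tensor `Z`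
with all diagonal entries equal to `1`. -/
def CBlockToep (r : ℕ) (j : Fin r → ℕ) : Set ((∀ k, Fin (j k + 1)) → ℂ) :=
  {z | ∃ Z : Matrix (∀ k, Fin (j k + 1)) (∀ k, Fin (j k + 1)) ℂ,
    Z.PosSemidef ∧ IsBlockToeplitz Z ∧ (∀ x, Z x x = 1) ∧
    z = fun x => Z x (fun _ => 0)}

lemma posSemidef_real_smul {n : Type*} [Fintype n]
    {Z : Matrix n n ℂ} (hZ : Z.PosSemidef) {c : ℝ} (hc : 0 ≤ c) :
    ((c : ℂ) • Z).PosSemidef := by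
  refine Matrix.PosSemidef.of_dotProduct_mulVec_nonneg ?_ ?_
  · unfold Matrix.IsHermitian
    rw [conjTranspose_smul, hZ.1.eq]
    congr 1
    simp
  · intro x
    rw [smul_mulVec, dotProduct_smul, smul_eq_mul]
    exact mul_nonneg (by exact_mod_cast hc) (hZ.dotProduct_mulVec_nonneg x)

lemma cBlockToep_convex (r : ℕ) (j : Fin r → ℕ) : Convex ℝ (CBlockToep r j) := by
  rintro z₁ ⟨Z₁, hP₁, hT₁, hd₁, hz₁⟩ z₂ ⟨Z₂, hP₂, hT₂, hd₂, hz₂⟩ a b ha hb hab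
  refine ⟨(a : ℂ) • Z₁ + (b : ℂ) • Z₂,
    (posSemidef_real_smul hP₁ ha).add (posSemidef_real_smul hP₂ hb), ?_, ?_, ?_⟩
  · intro x y x' y' h
    simp only [Matrix.add_apply, Matrix.smul_apply, smul_eq_mul,
      hT₁ x y x' y' h, hT₂ x y x' y' h]
  · intro x
    simp only [Matrix.add_apply, Matrix.smul_apply, hd₁ x, hd₂ x, smul_eq_mul, mul_one]
    exact_mod_cast congrArg (Complex.ofReal) hab
  · funext x
    simp [hz₁, hz₂, Matrix.add_apply, Matrix.smul_apply, Complex.real_smul]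

/-- Every pure tensor product of moment vectors lies in `C_BlockToep`; consequently the
convex hull of all such pure tensors is contained in `C_BlockToep`. -/
theorem stmt4 (r : ℕ) (j : Fin r → ℕ) :
    (∀ θ : Fin r → ℝ, (∀ k, θ k ∈ Set.Ico (0 : ℝ) (2 * Real.pi)) →
      (fun x : ∀ k, Fin (j k + 1) =>
          ∏ k, Complex.exp (Complex.I * ((x k : ℕ) : ℂ) * ((θ k : ℝ) : ℂ))) ∈ CBlockToep r j) ∧
    convexHull ℝ {v : (∀ k, Fin (j k + 1)) → ℂ |
        ∃ θ : Fin r → ℝ, (∀ k, θ k ∈ Set.Ico (0 : ℝ) (2 * Real.pi)) ∧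
          v = fun x => ∏ k, Complex.exp (Complex.I * ((x k : ℕ) : ℂ) * ((θ k : ℝ) : ℂ))}
      ⊆ CBlockToep r j := by
  have main : ∀ θ : Fin r → ℝ, (∀ k, θ k ∈ Set.Ico (0 : ℝ) (2 * Real.pi)) →
      (fun x : ∀ k, Fin (j k + 1) =>
          ∏ k, Complex.exp (Complex.I * ((x k : ℕ) : ℂ) * ((θ k : ℝ) : ℂ))) ∈ CBlockToep r j := by
    intro θ _
    set w : (∀ k, Fin (j k + 1)) → ℂ :=
      fun x => ∏ k, Complex.exp (Complex.I * ((x k : ℕ) : ℂ) * ((θ k : ℝ) : ℂ)) with hw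
    set A : Matrix (Fin 1) (∀ k, Fin (j k + 1)) ℂ :=
      Matrix.of fun _ x => (starRingEnd ℂ) (w x) with hA
    have key : ∀ x y, (Aᴴ * A) x y = ∏ k,
        Complex.exp (Complex.I * (((x k : ℤ) : ℂ) - ((y k : ℤ) : ℂ)) * ((θ k : ℝ) : ℂ)) := by
      intro x y
      have : (Aᴴ * A) x y = w x * (starRingEnd ℂ) (w y) := by
        simp [Matrix.mul_apply, hA, Matrix.conjTranspose_apply, Fin.sum_univ_one]
      rw [this, hw]
      simp only [map_prod, ← Finset.prod_mul_distrib]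
      refine Finset.prod_congr rfl fun k _ => ?_
      rw [← Complex.exp_conj, ← Complex.exp_add]
      congr 1
      simp only [_root_.map_mul, Complex.conj_I, Complex.conj_ofReal, map_natCast]
      push_cast
      ring
    refine ⟨Aᴴ * A, Matrix.posSemidef_conjTranspose_mul_self A, ?_, ?_, ?_⟩
    · intro x y x' y' h
      rw [key, key]
      refine Finset.prod_congr rfl fun k _ => ?_
      have hc : (((x k : ℤ) : ℂ) - ((y k : ℤ) : ℂ)) =
          (((x' k : ℤ) : ℂ) - ((y' k : ℤ) : ℂ)) := by exact_mod_cast h k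
      rw [hc]
    · intro x
      rw [key]
      simp
    · funext x
      rw [key]
      refine Finset.prod_congr rfl fun k _ => ?_
      norm_num
  exact ⟨main, convexHull_min (by rintro v ⟨θ, hθ, rfl⟩; exact main θ hθ)
    (cBlockToep_convex r j)⟩
end
end

section
/- With the notation of the band-limited dictionary learning problem, if Ĥ_k ⊆ Ĝ is an increasing sequence of irreducibles with ∪_k Ĥ_k = Ĝ, then OPT-Ĥ_k increases monotonically to OPT-Ĝ. -/
open Matrix Filter
open scoped BigOperators Topology

noncomputable section

/-- Squared Frobenius norm of a complex matrix. -/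
def frobSq {a b : Type*} [Fintype a] [Fintype b] (M : Matrix a b ℂ) : ℝ :=
  ∑ i, ∑ j, ‖M i j‖ ^ 2

/-- Block-diagonal operators indexed by the irreducibles `I`. -/
def Op (I : Type*) (d : I → ℕ) := ∀ ξ : I, Matrix (Fin (d ξ)) (Fin (d ξ)) ℂ

/-- Projection onto the blocks indexed by a finite set `S`. -/
def projS {I : Type*} [DecidableEq I] {d : I → ℕ} (S : Finset I) (t : Op I d) : Op I d :=
  fun ξ => if ξ ∈ S then t ξ else 0

/-- The projected atomic norm `‖t‖⁺_S = inf {‖z‖_Ĝ : z agrees with t on S}`. -/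
def normPlus {I : Type*} {d : I → ℕ} (normG : Op I d → ℝ) (S : Finset I) (t : Op I d) : ℝ :=
  sInf {r : ℝ | ∃ z : Op I d, (∀ ξ ∈ S, z ξ = t ξ) ∧ r = normG z}

/-- The residual `ŷ_ξ − Σⱼ φ̂_{j,ξ} ℓ_{j,ξ}*` of data point `i` at block `ξ`. -/
def resid {I : Type*} {d : I → ℕ} {n q : ℕ} (y : Fin n → Op I d)
    (φ : Fin q → Op I d) (ℓ : Fin n → Fin q → Op I d) (i : Fin n) (ξ : I) :
    Matrix (Fin (d ξ)) (Fin (d ξ)) ℂ :=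
  y i ξ - ∑ j, φ j ξ * (ℓ i j ξ)ᴴ

/-- The band-limited Lagrangian dictionary learning objective over the blocks in `S`. -/
def objFin {I : Type*} [DecidableEq I] {d : I → ℕ} {n q : ℕ}
    (normG : Op I d → ℝ) (lam : ℝ) (mu : Fin q → ℝ) (y : Fin n → Op I d)
    (S : Finset I) (φ : Fin q → Op I d) (ℓ : Fin n → Fin q → Op I d) : ℝ :=
  (∑ i, ((∑ ξ ∈ S, ((d ξ : ℝ)) ^ 2 / 2 * frobSq (resid y φ ℓ i ξ))
      + lam * ∑ j, normPlus normG S (projS S (ℓ i j))))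
    + ∑ j, mu j * ∑ ξ ∈ S, ((d ξ : ℝ)) ^ 2 * frobSq (φ j ξ)

/-- `OPT-Ĥ`: the optimal value of the band-limited problem over the blocks in `S`. -/
def OPTFin {I : Type*} [DecidableEq I] {d : I → ℕ} {n q : ℕ}
    (normG : Op I d → ℝ) (lam : ℝ) (mu : Fin q → ℝ) (y : Fin n → Op I d)
    (S : Finset I) : ℝ :=
  sInf {v : ℝ | ∃ (φ : Fin q → Op I d) (ℓ : Fin n → Fin q → Op I d),
      v = objFin normG lam mu y S φ ℓ}

/-- The full Lagrangian dictionary learning objective over all blocks of `Ĝ`. -/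
def objFull {I : Type*} {d : I → ℕ} {n q : ℕ}
    (normG : Op I d → ℝ) (lam : ℝ) (mu : Fin q → ℝ) (y : Fin n → Op I d)
    (φ : Fin q → Op I d) (ℓ : Fin n → Fin q → Op I d) : ℝ :=
  (∑ i, ((∑' ξ : I, ((d ξ : ℝ)) ^ 2 / 2 * frobSq (resid y φ ℓ i ξ))
      + lam * ∑ j, normG (ℓ i j)))
    + ∑ j, mu j * ∑' ξ : I, ((d ξ : ℝ)) ^ 2 * frobSq (φ j ξ)

/-- `OPT-Ĝ`: the optimal value of the full problem (over solutions with finite objective). -/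
def OPTFull {I : Type*} {d : I → ℕ} {n q : ℕ}
    (normG : Op I d → ℝ) (lam : ℝ) (mu : Fin q → ℝ) (y : Fin n → Op I d) : ℝ :=
  sInf {v : ℝ | ∃ (φ : Fin q → Op I d) (ℓ : Fin n → Fin q → Op I d),
      (∀ i, Summable fun ξ : I => ((d ξ : ℝ)) ^ 2 / 2 * frobSq (resid y φ ℓ i ξ)) ∧
      (∀ j, Summable fun ξ : I => ((d ξ : ℝ)) ^ 2 * frobSq (φ j ξ)) ∧
      v = objFull normG lam mu y φ ℓ}

section Aux

variable {I : Type*} [DecidableEq I] {d : I → ℕ} {n q : ℕ}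

lemma frobSq_nonneg {a b : Type*} [Fintype a] [Fintype b] (M : Matrix a b ℂ) : 0 ≤ frobSq M :=
  Finset.sum_nonneg fun _ _ => Finset.sum_nonneg fun _ _ => sq_nonneg _

lemma frobSq_zero {a b : Type*} [Fintype a] [Fintype b] : frobSq (0 : Matrix a b ℂ) = 0 := by
  simp [frobSq]

lemma normPlus_nonneg (normG : Op I d → ℝ) (hnG : ∀ z, 0 ≤ normG z) (S : Finset I)
    (t : Op I d) : 0 ≤ normPlus normG S t :=
  Real.sInf_nonneg fun _ hr => by obtain ⟨z, _, rfl⟩ := hr; exact hnG z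

lemma normPlus_le (normG : Op I d → ℝ) (hnG : ∀ z, 0 ≤ normG z) (S : Finset I) (t z : Op I d)
    (hz : ∀ ξ ∈ S, z ξ = t ξ) : normPlus normG S t ≤ normG z :=
  csInf_le ⟨0, fun _ hr => by obtain ⟨w, _, rfl⟩ := hr; exact hnG w⟩ ⟨z, hz, rfl⟩

lemma normPlus_mono (normG : Op I d → ℝ) (hnG : ∀ z, 0 ≤ normG z) {S S' : Finset I}
    (hSS : S ⊆ S') (t : Op I d) :
    normPlus normG S (projS S t) ≤ normPlus normG S' (projS S' t) := by
  apply csInf_le_csInf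
  · exact ⟨0, fun _ hr => by obtain ⟨w, _, rfl⟩ := hr; exact hnG w⟩
  · exact ⟨normG (projS S' t), projS S' t, fun ξ _ => rfl, rfl⟩
  · rintro r ⟨z, hz, rfl⟩
    refine ⟨z, fun ξ hξ => ?_, rfl⟩
    have := hz ξ (hSS hξ)
    simpa [projS, hξ, hSS hξ] using this

lemma objFin_nonneg (normG : Op I d → ℝ) (hnG : ∀ z, 0 ≤ normG z) (lam : ℝ) (hlam : 0 ≤ lam)
    (mu : Fin q → ℝ) (hmu : ∀ j, 0 ≤ mu j) (y : Fin n → Op I d)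
    (S : Finset I) (φ : Fin q → Op I d) (ℓ : Fin n → Fin q → Op I d) :
    0 ≤ objFin normG lam mu y S φ ℓ := by
  refine add_nonneg (Finset.sum_nonneg fun i _ => add_nonneg ?_ ?_)
    (Finset.sum_nonneg fun j _ => mul_nonneg (hmu j) (Finset.sum_nonneg fun ξ _ =>
      mul_nonneg (sq_nonneg _) (frobSq_nonneg _)))
  · exact Finset.sum_nonneg fun ξ _ => mul_nonneg (by positivity) (frobSq_nonneg _)
  · exact mul_nonneg hlam (Finset.sum_nonneg fun j _ => normPlus_nonneg normG hnG _ _)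

lemma objFin_mono (normG : Op I d → ℝ) (hnG : ∀ z, 0 ≤ normG z) (lam : ℝ) (hlam : 0 ≤ lam)
    (mu : Fin q → ℝ) (hmu : ∀ j, 0 ≤ mu j) (y : Fin n → Op I d) {S S' : Finset I}
    (hSS : S ⊆ S') (φ : Fin q → Op I d) (ℓ : Fin n → Fin q → Op I d) :
    objFin normG lam mu y S φ ℓ ≤ objFin normG lam mu y S' φ ℓ := by
  unfold objFin
  refine add_le_add (Finset.sum_le_sum fun i _ => add_le_add ?_ ?_)
    (Finset.sum_le_sum fun j _ => mul_le_mul_of_nonneg_left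
      (Finset.sum_le_sum_of_subset_of_nonneg hSS fun ξ _ _ =>
        mul_nonneg (sq_nonneg _) (frobSq_nonneg _)) (hmu j))
  · exact Finset.sum_le_sum_of_subset_of_nonneg hSS fun ξ _ _ =>
      mul_nonneg (by positivity) (frobSq_nonneg _)
  · exact mul_le_mul_of_nonneg_left
      (Finset.sum_le_sum fun j _ => normPlus_mono normG hnG hSS _) hlam

lemma OPTFin_bddBelow (normG : Op I d → ℝ) (hnG : ∀ z, 0 ≤ normG z) (lam : ℝ) (hlam : 0 ≤ lam)
    (mu : Fin q → ℝ) (hmu : ∀ j, 0 ≤ mu j) (y : Fin n → Op I d) (S : Finset I) :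
    BddBelow {v : ℝ | ∃ (φ : Fin q → Op I d) (ℓ : Fin n → Fin q → Op I d),
      v = objFin normG lam mu y S φ ℓ} :=
  ⟨0, by rintro v ⟨φ, ℓ, rfl⟩; exact objFin_nonneg normG hnG lam hlam mu hmu y S φ ℓ⟩

lemma OPTFin_le (normG : Op I d → ℝ) (hnG : ∀ z, 0 ≤ normG z) (lam : ℝ) (hlam : 0 ≤ lam)
    (mu : Fin q → ℝ) (hmu : ∀ j, 0 ≤ mu j) (y : Fin n → Op I d) (S : Finset I)
    (φ : Fin q → Op I d) (ℓ : Fin n → Fin q → Op I d) :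
    OPTFin normG lam mu y S ≤ objFin normG lam mu y S φ ℓ :=
  csInf_le (OPTFin_bddBelow normG hnG lam hlam mu hmu y S) ⟨φ, ℓ, rfl⟩

lemma OPTFin_mono (normG : Op I d → ℝ) (hnG : ∀ z, 0 ≤ normG z) (lam : ℝ) (hlam : 0 ≤ lam)
    (mu : Fin q → ℝ) (hmu : ∀ j, 0 ≤ mu j) (y : Fin n → Op I d) {S S' : Finset I}
    (hSS : S ⊆ S') : OPTFin normG lam mu y S ≤ OPTFin normG lam mu y S' := by
  have z0 : Op I d := fun ξ => (0 : Matrix (Fin (d ξ)) (Fin (d ξ)) ℂ)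
  refine le_csInf ⟨objFin normG lam mu y S' (fun _ ξ => 0) (fun _ _ ξ => 0), _, _, rfl⟩ ?_
  rintro v ⟨φ, ℓ, rfl⟩
  exact (OPTFin_le normG hnG lam hlam mu hmu y S φ ℓ).trans
    (objFin_mono normG hnG lam hlam mu hmu y hSS φ ℓ)

end Aux

section Aux2

variable {I : Type*} [DecidableEq I] {d : I → ℕ} {n q : ℕ}

lemma OPTFull_bddBelow (normG : Op I d → ℝ) (hnG : ∀ z, 0 ≤ normG z) (lam : ℝ) (hlam : 0 ≤ lam)
    (mu : Fin q → ℝ) (hmu : ∀ j, 0 ≤ mu j) (y : Fin n → Op I d) :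
    BddBelow {v : ℝ | ∃ (φ : Fin q → Op I d) (ℓ : Fin n → Fin q → Op I d),
      (∀ i, Summable fun ξ : I => ((d ξ : ℝ)) ^ 2 / 2 * frobSq (resid y φ ℓ i ξ)) ∧
      (∀ j, Summable fun ξ : I => ((d ξ : ℝ)) ^ 2 * frobSq (φ j ξ)) ∧
      v = objFull normG lam mu y φ ℓ} := by
  refine ⟨0, ?_⟩
  rintro v ⟨φ, ℓ, _, _, rfl⟩
  refine add_nonneg (Finset.sum_nonneg fun i _ => add_nonneg ?_ ?_)
    (Finset.sum_nonneg fun j _ => mul_nonneg (hmu j)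
      (tsum_nonneg fun ξ => mul_nonneg (sq_nonneg _) (frobSq_nonneg _)))
  · exact tsum_nonneg fun ξ => mul_nonneg (by positivity) (frobSq_nonneg _)
  · exact mul_nonneg hlam (Finset.sum_nonneg fun j _ => hnG _)

lemma OPTFin_le_OPTFull (normG : Op I d → ℝ) (hnG : ∀ z, 0 ≤ normG z) (lam : ℝ) (hlam : 0 ≤ lam)
    (mu : Fin q → ℝ) (hmu : ∀ j, 0 ≤ mu j) (y : Fin n → Op I d)
    (hsum : ∀ i, Summable fun ξ : I => ((d ξ : ℝ)) ^ 2 * frobSq (y i ξ)) (S : Finset I) :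
    OPTFin normG lam mu y S ≤ OPTFull normG lam mu y := by
  classical
  let φ0 : Fin q → Op I d := fun _ ξ => (0 : Matrix (Fin (d ξ)) (Fin (d ξ)) ℂ)
  let ℓ0 : Fin n → Fin q → Op I d := fun _ _ ξ => (0 : Matrix (Fin (d ξ)) (Fin (d ξ)) ℂ)
  have hres0 : ∀ i ξ, resid y φ0 ℓ0 i ξ = y i ξ := by
    intro i ξ; simp [resid, φ0, ℓ0]
  refine le_csInf ⟨objFull normG lam mu y φ0 ℓ0,
    φ0, ℓ0, fun i => ?_, fun j => ?_, rfl⟩ ?_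
  · exact (((hsum i).mul_left (1/2)).congr fun ξ => by rw [hres0]; ring)
  · exact summable_of_ne_finset_zero (s := ∅) fun ξ _ => by simp [φ0, frobSq_zero]
  rintro v ⟨φ, ℓ, h1, h2, rfl⟩
  refine (OPTFin_le normG hnG lam hlam mu hmu y S φ ℓ).trans ?_
  unfold objFin objFull
  refine add_le_add (Finset.sum_le_sum fun i _ => add_le_add ?_ ?_)
    (Finset.sum_le_sum fun j _ => mul_le_mul_of_nonneg_left
      (Summable.sum_le_tsum S (fun ξ _ => mul_nonneg (sq_nonneg _) (frobSq_nonneg _)) (h2 j)) (hmu j))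
  · exact Summable.sum_le_tsum S (fun ξ _ => mul_nonneg (by positivity) (frobSq_nonneg _)) (h1 i)
  · refine mul_le_mul_of_nonneg_left (Finset.sum_le_sum fun j _ => ?_) hlam
    exact normPlus_le normG hnG S _ (ℓ i j) fun ξ hξ => by simp [projS, hξ]

end Aux2

section Aux3

variable {I : Type*} [DecidableEq I] {d : I → ℕ} {n q : ℕ}

lemma OPTFull_le_objFin_add (normG : Op I d → ℝ) (hnG : ∀ z, 0 ≤ normG z) (lam : ℝ)
    (hlam : 0 ≤ lam) (mu : Fin q → ℝ) (hmu : ∀ j, 0 ≤ mu j) (y : Fin n → Op I d)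
    (hsum : ∀ i, Summable fun ξ : I => ((d ξ : ℝ)) ^ 2 * frobSq (y i ξ)) (S : Finset I)
    (φ : Fin q → Op I d) (ℓ : Fin n → Fin q → Op I d) :
    OPTFull normG lam mu y ≤ objFin normG lam mu y S φ ℓ
      + ∑ i, ((∑' ξ : I, ((d ξ : ℝ)) ^ 2 / 2 * frobSq (y i ξ))
          - ∑ ξ ∈ S, ((d ξ : ℝ)) ^ 2 / 2 * frobSq (y i ξ)) := by
  classical
  refine le_of_forall_pos_le_add fun ε hε => ?_
  set C : ℝ := lam * n * q with hC
  have hCnn : 0 ≤ C := by positivity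
  set η : ℝ := ε / (C + 1) with hηdef
  have hηpos : 0 < η := div_pos hε (by linarith)
  have hCη : C * η ≤ ε := by
    have h1 : (0:ℝ) < C + 1 := by linarith
    calc C * η = C * ε / (C + 1) := by rw [hηdef]; ring
      _ ≤ ε := by rw [div_le_iff₀ h1]; nlinarith
  -- choose near-optimal extensions z i j
  have hz : ∀ i j, ∃ z : Op I d, (∀ ξ ∈ S, z ξ = ℓ i j ξ) ∧
      normG z ≤ normPlus normG S (projS S (ℓ i j)) + η := by
    intro i j
    have hne : {r : ℝ | ∃ z : Op I d, (∀ ξ ∈ S, z ξ = projS S (ℓ i j) ξ) ∧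
        r = normG z}.Nonempty :=
      ⟨normG (projS S (ℓ i j)), projS S (ℓ i j), fun ξ _ => rfl, rfl⟩
    obtain ⟨r, ⟨z, hzagree, rfl⟩, hrlt⟩ :=
      exists_lt_of_csInf_lt hne (lt_add_of_pos_right (normPlus normG S (projS S (ℓ i j))) hηpos)
    exact ⟨z, fun ξ hξ => by simpa [projS, hξ] using hzagree ξ hξ, hrlt.le⟩
  choose z hzag hzle using hz
  let φ' : Fin q → Op I d := fun j ξ => if ξ ∈ S then φ j ξ else 0
  -- residual description
  have hres : ∀ i ξ, resid y φ' z i ξ = if hξ : ξ ∈ S then resid y φ ℓ i ξ else y i ξ := by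
    intro i ξ
    by_cases hξ : ξ ∈ S
    · simp only [resid, dif_pos hξ]
      congr 1
      refine Finset.sum_congr rfl fun j _ => ?_
      rw [show φ' j ξ = φ j ξ from if_pos hξ, hzag i j ξ hξ]
    · simp only [resid, dif_neg hξ]
      have : ∀ j : Fin q, φ' j ξ * (z i j ξ)ᴴ = 0 := fun j => by
        rw [show φ' j ξ = 0 from if_neg hξ, Matrix.zero_mul]
      rw [Finset.sum_congr rfl fun j _ => this j]
      simp
  -- per-data-point summability and tsum computation
  set f : Fin n → I → ℝ := fun i ξ => ((d ξ : ℝ)) ^ 2 / 2 * frobSq (resid y φ' z i ξ) with hfdef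
  set g : Fin n → I → ℝ := fun i ξ => ((d ξ : ℝ)) ^ 2 / 2 * frobSq (y i ξ) with hgdef
  have hgsummable : ∀ i, Summable (g i) := fun i =>
    ((hsum i).mul_left (1/2)).congr fun ξ => by simp only [hgdef]; ring
  have hfoff : ∀ i ξ, ξ ∉ S → f i ξ = g i ξ := by
    intro i ξ hξ; simp only [hfdef, hgdef, hres i ξ, dif_neg hξ]
  have hfon : ∀ i, ∀ ξ ∈ S, f i ξ = ((d ξ : ℝ)) ^ 2 / 2 * frobSq (resid y φ ℓ i ξ) := by
    intro i ξ hξ; simp only [hfdef, hres i ξ, dif_pos hξ]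
  set h : Fin n → I → ℝ := fun i ξ => if ξ ∈ S then f i ξ - g i ξ else 0 with hhdef
  have hhsummable : ∀ i, Summable (h i) := fun i =>
    summable_of_ne_finset_zero (s := S) fun ξ hξ => if_neg hξ
  have hgh : ∀ i ξ, g i ξ + h i ξ = f i ξ := by
    intro i ξ
    by_cases hξ : ξ ∈ S
    · simp [hhdef, hξ]
    · simp [hhdef, hξ, hfoff i ξ hξ]
  have hfsummable : ∀ i, Summable (f i) := fun i =>
    ((hgsummable i).add (hhsummable i)).congr (hgh i)
  have htsumf : ∀ i, (∑' ξ : I, f i ξ)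
      = (∑ ξ ∈ S, ((d ξ : ℝ)) ^ 2 / 2 * frobSq (resid y φ ℓ i ξ))
        + ((∑' ξ : I, g i ξ) - ∑ ξ ∈ S, g i ξ) := by
    intro i
    have h1 : (∑' ξ : I, f i ξ) = (∑' ξ : I, g i ξ) + ∑' ξ : I, h i ξ := by
      rw [← Summable.tsum_add (hgsummable i) (hhsummable i)]
      exact tsum_congr fun ξ => (hgh i ξ).symm
    have h2 : (∑' ξ : I, h i ξ) = ∑ ξ ∈ S, h i ξ :=
      tsum_eq_sum fun ξ hξ => if_neg hξ
    have h3 : ∑ ξ ∈ S, h i ξ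
        = (∑ ξ ∈ S, ((d ξ : ℝ)) ^ 2 / 2 * frobSq (resid y φ ℓ i ξ)) - ∑ ξ ∈ S, g i ξ := by
      rw [← Finset.sum_sub_distrib]
      exact Finset.sum_congr rfl fun ξ hξ => by
        simp only [hhdef, if_pos hξ, hfon i ξ hξ]
    rw [h1, h2, h3]; ring
  -- dictionary summability and tsum
  have hφ'sum : ∀ j, Summable fun ξ : I => ((d ξ : ℝ)) ^ 2 * frobSq (φ' j ξ) := fun j =>
    summable_of_ne_finset_zero (s := S) fun ξ hξ => by
      simp [φ', if_neg hξ, frobSq_zero]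
  have hφ'tsum : ∀ j, (∑' ξ : I, ((d ξ : ℝ)) ^ 2 * frobSq (φ' j ξ))
      = ∑ ξ ∈ S, ((d ξ : ℝ)) ^ 2 * frobSq (φ j ξ) := by
    intro j
    rw [tsum_eq_sum (s := S) fun ξ hξ => by simp [φ', if_neg hξ, frobSq_zero]]
    exact Finset.sum_congr rfl fun ξ hξ => by rw [show φ' j ξ = φ j ξ from if_pos hξ]
  -- OPTFull ≤ objFull φ' z
  have hmem : OPTFull normG lam mu y ≤ objFull normG lam mu y φ' z :=
    csInf_le (OPTFull_bddBelow normG hnG lam hlam mu hmu y)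
      ⟨φ', z, hfsummable, hφ'sum, rfl⟩
  refine hmem.trans ?_
  -- bound objFull φ' z
  have hnorm : ∀ i, lam * ∑ j, normG (z i j)
      ≤ lam * ∑ j, normPlus normG S (projS S (ℓ i j)) + lam * (q * η) := by
    intro i
    have : (∑ j, normG (z i j)) ≤ (∑ j, normPlus normG S (projS S (ℓ i j))) + q * η := by
      calc (∑ j, normG (z i j)) ≤ ∑ j : Fin q, (normPlus normG S (projS S (ℓ i j)) + η) :=
            Finset.sum_le_sum fun j _ => hzle i j
        _ = (∑ j, normPlus normG S (projS S (ℓ i j))) + q * η := by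
            rw [Finset.sum_add_distrib, Finset.sum_const, Finset.card_univ, Fintype.card_fin,
              nsmul_eq_mul]
    calc lam * ∑ j, normG (z i j)
        ≤ lam * ((∑ j, normPlus normG S (projS S (ℓ i j))) + q * η) :=
          mul_le_mul_of_nonneg_left this hlam
      _ = lam * ∑ j, normPlus normG S (projS S (ℓ i j)) + lam * (q * η) := by ring
  have hCηeq : (n : ℝ) * (lam * (q * η)) = C * η := by rw [hC]; ring
  calc objFull normG lam mu y φ' z
      = (∑ i, ((∑ ξ ∈ S, ((d ξ : ℝ)) ^ 2 / 2 * frobSq (resid y φ ℓ i ξ))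
            + ((∑' ξ : I, g i ξ) - ∑ ξ ∈ S, g i ξ) + lam * ∑ j, normG (z i j)))
          + ∑ j, mu j * ∑ ξ ∈ S, ((d ξ : ℝ)) ^ 2 * frobSq (φ j ξ) := by
        unfold objFull
        congr 1
        · exact Finset.sum_congr rfl fun i _ => by rw [show (∑' ξ : I, ((d ξ : ℝ)) ^ 2 / 2
            * frobSq (resid y φ' z i ξ)) = ∑' ξ : I, f i ξ from rfl, htsumf i]
        · exact Finset.sum_congr rfl fun j _ => by rw [hφ'tsum j]
    _ ≤ (∑ i, ((∑ ξ ∈ S, ((d ξ : ℝ)) ^ 2 / 2 * frobSq (resid y φ ℓ i ξ))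
            + ((∑' ξ : I, g i ξ) - ∑ ξ ∈ S, g i ξ)
            + (lam * ∑ j, normPlus normG S (projS S (ℓ i j)) + lam * (q * η))))
          + ∑ j, mu j * ∑ ξ ∈ S, ((d ξ : ℝ)) ^ 2 * frobSq (φ j ξ) := by
        refine add_le_add_left (Finset.sum_le_sum fun i _ => ?_) _
        exact add_le_add_right (hnorm i) _
    _ = objFin normG lam mu y S φ ℓ
          + (∑ i, ((∑' ξ : I, g i ξ) - ∑ ξ ∈ S, g i ξ)) + (n : ℝ) * (lam * (q * η)) := by
        unfold objFin
        rw [show ∀ (a b c : ℝ), a + b + c = a + (b + c) from fun a b c => by ring]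
        simp only [Finset.sum_add_distrib, Finset.sum_const, Finset.card_univ, Fintype.card_fin,
          nsmul_eq_mul]
        ring
    _ ≤ objFin normG lam mu y S φ ℓ
          + (∑ i, ((∑' ξ : I, g i ξ) - ∑ ξ ∈ S, g i ξ)) + ε := by
        have h2 : (n : ℝ) * (lam * (q * η)) = C * η := by rw [hC]; ring
        rw [h2]
        linarith [hCη]
  
end Aux3

/-- If `Ĥ_k ↑ Ĝ` is an increasing exhausting sequence of (finite) sets of irreducibles, then
`OPT-Ĥ_k` increases monotonically to `OPT-Ĝ`. -/
theorem stmt11 {I : Type*} [DecidableEq I] {d : I → ℕ} {n q : ℕ}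
    (normG : Op I d → ℝ) (hnG : ∀ z, 0 ≤ normG z)
    (lam : ℝ) (hlam : 0 ≤ lam) (mu : Fin q → ℝ) (hmu : ∀ j, 0 ≤ mu j)
    (y : Fin n → Op I d)
    (hsum : ∀ i, Summable fun ξ : I => ((d ξ : ℝ)) ^ 2 * frobSq (y i ξ))
    (Hk : ℕ → Finset I) (hmono : Monotone Hk) (hcover : ∀ ξ : I, ∃ k, ξ ∈ Hk k) :
    Monotone (fun k => OPTFin normG lam mu y (Hk k) : ℕ → ℝ) ∧
    Tendsto (fun k => OPTFin normG lam mu y (Hk k))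
      atTop (𝓝 (OPTFull normG lam mu y)) := by
    classical
  set g : Fin n → I → ℝ := fun i ξ => ((d ξ : ℝ)) ^ 2 / 2 * frobSq (y i ξ) with hg
  have hgsummable : ∀ i, Summable (g i) := fun i =>
    ((hsum i).mul_left (1/2)).congr fun ξ => by simp only [hg]; ring
  set eps : ℕ → ℝ := fun k => ∑ i, ((∑' ξ : I, g i ξ) - ∑ ξ ∈ Hk k, g i ξ) with heps
  have hup : ∀ k, OPTFin normG lam mu y (Hk k) ≤ OPTFull normG lam mu y := fun k =>
    OPTFin_le_OPTFull normG hnG lam hlam mu hmu y hsum (Hk k)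
  have hlow : ∀ k, OPTFull normG lam mu y - eps k ≤ OPTFin normG lam mu y (Hk k) := by
    intro k
    let φ0 : Fin q → Op I d := fun _ ξ => (0 : Matrix (Fin (d ξ)) (Fin (d ξ)) ℂ)
    let ℓ0 : Fin n → Fin q → Op I d := fun _ _ ξ => (0 : Matrix (Fin (d ξ)) (Fin (d ξ)) ℂ)
    refine le_csInf ⟨objFin normG lam mu y (Hk k) φ0 ℓ0, φ0, ℓ0, rfl⟩ ?_
    rintro v ⟨φ, ℓ, rfl⟩
    have h1 := OPTFull_le_objFin_add normG hnG lam hlam mu hmu y hsum (Hk k) φ ℓ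
    have h2 : (∑ i, ((∑' ξ : I, ((d ξ : ℝ)) ^ 2 / 2 * frobSq (y i ξ))
        - ∑ ξ ∈ Hk k, ((d ξ : ℝ)) ^ 2 / 2 * frobSq (y i ξ))) = eps k := rfl
    rw [h2] at h1
    linarith
  have hepsto : Tendsto eps atTop (𝓝 0) := by
    have hterm : ∀ i : Fin n, Tendsto (fun k => (∑' ξ : I, g i ξ) - ∑ ξ ∈ Hk k, g i ξ)
        atTop (𝓝 ((∑' ξ : I, g i ξ) - (∑' ξ : I, g i ξ))) := by
      intro i
      exact tendsto_const_nhds.sub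
        ((hgsummable i).hasSum.comp (tendsto_atTop_finset_of_monotone hmono hcover))
    have := tendsto_finset_sum (Finset.univ : Finset (Fin n)) fun i _ => hterm i
    simpa [heps] using this
  refine ⟨fun k k' hkk' => OPTFin_mono normG hnG lam hlam mu hmu y (hmono hkk'), ?_⟩
  have h1 : Tendsto (fun k => OPTFull normG lam mu y - eps k) atTop
      (𝓝 (OPTFull normG lam mu y)) := by
    simpa using tendsto_const_nhds.sub hepsto
  exact tendsto_of_tendsto_of_tendsto_of_le_of_le h1 tendsto_const_nhds hlow hup
end
end

section
/- Suppose the optimal dictionary Φ̂ of the full problem is canonically unique with modulus δ(ε) → 0 as ε → 0, and Ĥ_k ↑ Ĝ with OPT-Ĥ_k → OPT-Ĝ and OBJ-Ĥ_k → OPT-Ĝ. Then the dictionaries Φ̂^{Ĥ_k} learned on the truncations satisfy D(Φ̂^{Ĥ_k}, Φ̂) → 0 as k → ∞. -/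
open Filter
open scoped Topology

/-- If the optimal dictionary `Φ̂` of the full problem is canonically unique with modulus
`δ(ε) → 0`, and the dictionaries `Φ̂^{Ĥ_k}` learned on the truncations attain objective values
`OBJ-Ĥ_k → OPT-Ĝ` in the full problem, then `D(Φ̂^{Ĥ_k}, Φ̂) → 0`. -/
theorem stmt12 {Dict : Type*} (D : Dict → Dict → ℝ) (hD : ∀ a b, 0 ≤ D a b)
    (obj : Dict → ℝ) (OPT : ℝ) (hOPT : ∀ Φ, OPT ≤ obj Φ)
    (Φstar : Dict) (δ : ℝ → ℝ)
    (hδ : Tendsto δ (nhdsWithin 0 (Set.Ioi 0)) (𝓝 0))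
    (huniq : ∀ ε > (0 : ℝ), ∀ Φ, obj Φ ≤ OPT + ε → D Φstar Φ ≤ δ ε)
    (Φk : ℕ → Dict)
    (hobj : Tendsto (fun k => obj (Φk k)) atTop (𝓝 OPT)) :
    Tendsto (fun k => D Φstar (Φk k)) atTop (𝓝 0) := by
  rw [Metric.tendsto_atTop]
  intro η hη
  -- find ε > 0 with δ ε < η
  have h1 : ∀ᶠ ε in nhdsWithin (0:ℝ) (Set.Ioi 0), δ ε < η :=
    hδ.eventually (eventually_lt_nhds hη)
  obtain ⟨ε, hεη, hεpos'⟩ := (h1.and (eventually_mem_nhdsWithin)).exists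
  have hεpos : (0:ℝ) < ε := hεpos'
  -- eventually obj (Φk k) ≤ OPT + ε
  have h2 : ∀ᶠ k in atTop, obj (Φk k) < OPT + ε :=
    hobj.eventually (eventually_lt_nhds (by linarith : OPT < OPT + ε))
  rw [eventually_atTop] at h2
  obtain ⟨N, hN⟩ := h2
  refine ⟨N, fun n hn => ?_⟩
  have hle : D Φstar (Φk n) ≤ δ ε := huniq ε hεpos _ (le_of_lt (hN n hn))
  have h0 := hD Φstar (Φk n)
  rw [Real.dist_eq, sub_zero, abs_of_nonneg h0]
  linarith
end
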